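/- Thresholding stream invariant (utility of accepted elements): Let f : Finset V → ℝ be normalized (f(∅) = 0), let τ ≥ 0 be a real number and N a natural number. Then for every list L of elements of V, the output S = T_f(L, τ, N) satisfies f(S) ≥ |S|·τ. In particular, if |S| = N then f(S) ≥ N·τ. -/
import Mathlib

open scoped Classical

/-- The marginal gain `Δ(e|S) = f(S ∪ {e}) − f(S)`. -/
def marginal {V : Type*} [DecidableEq V] (f : Finset V → ℝ) (e : V) (S : Finset V) : ℝ :=
  f (insert e S) - f S

/-- The thresholding stream output `T_f(L, τ, N)`: fold over the list `L` starting from `∅`;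
when processing `e` with current set `S`, add `e` if `Δ(e|S) ≥ τ` and `|S| < N`. -/
noncomputable def tstream {V : Type*} [DecidableEq V]
    (f : Finset V → ℝ) (τ : ℝ) (N : ℕ) (L : List V) : Finset V :=
  L.foldl (fun S e => if marginal f e S ≥ τ ∧ S.card < N then insert e S else S) ∅

lemma tstream_aux {V : Type*} [DecidableEq V] (f : Finset V → ℝ) (τ : ℝ) (hτ : 0 ≤ τ)
    (N : ℕ) (L : List V) (S : Finset V) (h : (S.card : ℝ) * τ ≤ f S) :
    ((L.foldl (fun S e => if marginal f e S ≥ τ ∧ S.card < N then insert e S else S) S).card : ℝ) * τ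
      ≤ f (L.foldl (fun S e => if marginal f e S ≥ τ ∧ S.card < N then insert e S else S) S) := by
  induction L generalizing S with
  | nil => exact h
  | cons e L ih =>
      simp only [List.foldl_cons]
      by_cases hc : marginal f e S ≥ τ ∧ S.card < N
      · rw [if_pos hc]
        apply ih
        have hins : ((insert e S).card : ℝ) ≤ (S.card : ℝ) + 1 := by
          exact_mod_cast Finset.card_insert_le e S
        have : f (insert e S) = f S + marginal f e S := by
          simp [marginal]
        rw [this]
        calc ((insert e S).card : ℝ) * τ ≤ ((S.card : ℝ) + 1) * τ := by
              exact mul_le_mul_of_nonneg_right hins hτ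
          _ = (S.card : ℝ) * τ + τ := by ring
          _ ≤ f S + marginal f e S := add_le_add h hc.1
      · rw [if_neg hc]; exact ih S h

theorem tstream_utility_ge_card_mul_threshold
    {V : Type*} [Fintype V] [DecidableEq V] (f : Finset V → ℝ)
    (h0 : f ∅ = 0) (τ : ℝ) (hτ : 0 ≤ τ) (N : ℕ) (L : List V) :
    ((tstream f τ N L).card : ℝ) * τ ≤ f (tstream f τ N L) ∧
      ((tstream f τ N L).card = N → (N : ℝ) * τ ≤ f (tstream f τ N L)) := by
  have h : ((tstream f τ N L).card : ℝ) * τ ≤ f (tstream f τ N L) :=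
    tstream_aux f τ hτ N L ∅ (by simp [h0])
  exact ⟨h, fun hcard => le_trans (le_of_eq (by rw [hcard])) h⟩
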